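/- Let E be a metric space which is not complete. Then there exists a bounded continuous real-valued function on E which is not uniformly continuous, i.e., UC_b(E) ≠ C_b(E). -/

import Mathlib

open Filter Topology Set

set_option maxHeartbeats 1000000 in
open UniformSpace in
theorem stmt13_aux {E : Type*} [MetricSpace E] (h : ¬ CompleteSpace E) :
    ∃ f : E → ℝ, Continuous f ∧ (∀ e, f e ∈ Set.Icc (0:ℝ) 1) ∧ ¬ UniformContinuous f := by
  -- find a point of the completion not in the range of the embedding
  obtain ⟨p, hp⟩ : ∃ p : Completion E, p ∉ Set.range ((↑) : E → Completion E) := by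
    by_contra hs
    push_neg at hs
    exact h <| (Completion.coe_isometry.isUniformInducing.completeSpace_congr
      (fun p => hs p)).mpr inferInstance
  set d : E → ℝ := fun e => dist (↑e : Completion E) p with hd
  have hdpos : ∀ e, 0 < d e := fun e =>
    dist_pos.2 (fun he => hp ⟨e, he⟩)
  have hdcont : Continuous d :=
    Continuous.dist (UniformSpace.Completion.continuous_coe E) continuous_const
  have hdlip : ∀ e e', dist e e' ≤ d e + d e' := fun e e' => by
    rw [← UniformSpace.Completion.dist_eq e e']
    calc dist (↑e : Completion E) ↑e' ≤ dist (↑e : Completion E) p + dist p ↑e' :=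
          dist_triangle _ _ _
      _ = d e + d e' := by rw [dist_comm p]
  -- points with small d
  have key : ∀ ε : ℝ, 0 < ε → ∃ e : E, d e < ε := by
    intro ε hε
    have hpcl : p ∈ closure (Set.range ((↑) : E → Completion E)) := by
      rw [UniformSpace.Completion.denseRange_coe.closure_range]; trivial
    obtain ⟨q, hq, hqd⟩ := Metric.mem_closure_iff.1 hpcl ε hε
    obtain ⟨e, rfl⟩ := hq
    exact ⟨e, by simpa [d, dist_comm] using hqd⟩
  choose F hF using fun (ε : ℝ) (hε : 0 < ε) => key ε hε
  -- recursive sequence with rapidly decreasing d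
  have e0 : E := F 1 one_pos
  set x : ℕ → E := fun n => Nat.rec e0 (fun _ xn => F (d xn / 2) (by have := hdpos xn; linarith)) n with hx
  set a : ℕ → ℝ := fun n => d (x n) with ha
  have hstep : ∀ n, a (n + 1) < a n / 2 := fun n => hF _ _
  have hanti : StrictAnti a := strictAnti_nat_of_succ_lt fun n =>
    (hstep n).trans_le (by have := hdpos (x n); linarith [(hdpos (x n)).le])
  have hapos : ∀ n, 0 < a n := fun n => hdpos (x n)
  have hbound : ∀ n, a n ≤ a 0 * (1/2) ^ n := by
    intro n
    induction n with
    | zero => simp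
    | succ n ih =>
      have := hstep n
      have h2 : (1/2:ℝ) ^ (n+1) = (1/2)^n / 2 := by ring
      rw [h2]
      have ha0 : 0 < a 0 := hapos 0
      nlinarith
  have hatend : Tendsto a atTop (𝓝 0) := by
    have h1 : Tendsto (fun n => a 0 * (1/2:ℝ)^n) atTop (𝓝 (a 0 * 0)) :=
      (tendsto_pow_atTop_nhds_zero_of_lt_one (by norm_num) (by norm_num)).const_mul _
    rw [mul_zero] at h1
    exact squeeze_zero (fun n => (hapos n).le) hbound h1
  -- the two separated value sets
  set SA : Set ℝ := insert 0 (Set.range fun n => a (2 * n)) with hSA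
  set SB : Set ℝ := insert 0 (Set.range fun n => a (2 * n + 1)) with hSB
  have hgA : Tendsto (fun n : ℕ => 2 * n) atTop atTop :=
    Filter.tendsto_atTop_atTop.mpr fun b => ⟨b, fun n hn => by omega⟩
  have hgB : Tendsto (fun n : ℕ => 2 * n + 1) atTop atTop :=
    Filter.tendsto_atTop_atTop.mpr fun b => ⟨b, fun n hn => by omega⟩
  have hSAc : IsClosed SA := by
    have := ((hatend.comp hgA).isCompact_insert_range).isClosed
    simpa [Function.comp_def] using this
  have hSBc : IsClosed SB := by
    have := ((hatend.comp hgB).isCompact_insert_range).isClosed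
    simpa [Function.comp_def] using this
  have haA : ∀ n, a (2*n) ∈ SA := fun n => Or.inr ⟨n, rfl⟩
  have haB : ∀ n, a (2*n+1) ∈ SB := fun n => Or.inr ⟨n, rfl⟩
  have hdenom : ∀ e, 0 < Metric.infDist (d e) SA + Metric.infDist (d e) SB := by
    intro e
    rcases lt_or_ge 0 (Metric.infDist (d e) SA) with hlt | hle
    · have := Metric.infDist_nonneg (s := SB) (x := d e); linarith
    · have hA0 : Metric.infDist (d e) SA = 0 :=
        le_antisymm hle Metric.infDist_nonneg
      have heA : d e ∈ SA :=
        (hSAc.mem_iff_infDist_zero ⟨0, Or.inl rfl⟩).mpr hA0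
      -- then d e ∉ SB, so second infDist positive
      have heB : d e ∉ SB := by
        intro heB
        rcases heA with heA | ⟨n, hn⟩
        · exact absurd heA.symm (ne_of_lt (hdpos e))
        rcases heB with heB | ⟨m, hm⟩
        · exact absurd heB.symm (ne_of_lt (hdpos e))
        · have : 2 * n = 2 * m + 1 := hanti.injective (by simpa using hn.trans hm.symm)
          omega
      have : 0 < Metric.infDist (d e) SB :=
        (hSBc.notMem_iff_infDist_pos ⟨0, Or.inl rfl⟩).mp heB
      linarith
  set f : E → ℝ := fun e =>
    Metric.infDist (d e) SA / (Metric.infDist (d e) SA + Metric.infDist (d e) SB) with hf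
  have hfA : ∀ n, f (x (2*n)) = 0 := by
    intro n
    have : Metric.infDist (d (x (2*n))) SA = 0 :=
      Metric.infDist_zero_of_mem (haA n)
    simp [f, this]
  have hfB : ∀ n, f (x (2*n+1)) = 1 := by
    intro n
    have hB : Metric.infDist (d (x (2*n+1))) SB = 0 :=
      Metric.infDist_zero_of_mem (haB n)
    have hA : 0 < Metric.infDist (d (x (2*n+1))) SA := by
      have := hdenom (x (2*n+1)); rw [hB] at this; linarith
    simp only [f, hB, add_zero, div_self hA.ne']
  refine ⟨f, ?_, ?_, ?_⟩
  · apply Continuous.div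
    · exact (Metric.continuous_infDist_pt SA).comp hdcont
    · exact ((Metric.continuous_infDist_pt SA).comp hdcont).add
        ((Metric.continuous_infDist_pt SB).comp hdcont)
    · exact fun e => (hdenom e).ne'
  · intro e
    constructor
    · exact div_nonneg Metric.infDist_nonneg (hdenom e).le
    · rw [div_le_one (hdenom e)]
      have := Metric.infDist_nonneg (s := SB) (x := d e); linarith
  · intro hUC
    obtain ⟨δ, hδ, hδ'⟩ := Metric.uniformContinuous_iff.1 hUC (1/2) (by norm_num)
    obtain ⟨N, hN⟩ := (Metric.tendsto_atTop.1 hatend (δ/2) (half_pos hδ)).imp (fun N hN => hN)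
    have h2N : a (2*N) < δ/2 := by
      have := hN (2*N) (by omega); rw [Real.dist_eq, sub_zero, abs_of_pos (hapos _)] at this
      exact this
    have h2N1 : a (2*N+1) < a (2*N) := hanti (by omega : 2*N < 2*N+1)
    have hclose : dist (x (2*N)) (x (2*N+1)) < δ := by
      calc dist (x (2*N)) (x (2*N+1)) ≤ a (2*N) + a (2*N+1) := hdlip _ _
        _ < δ := by
            have hs := hstep (2*N)
            have := hapos (2*N)
            linarith
    have := hδ' hclose
    rw [hfA N, hfB N, Real.dist_eq] at this
    norm_num at this
  
theorem stmt13 {E : Type*} [MetricSpace E] (h : ¬ CompleteSpace E) :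
    ∃ f : BoundedContinuousFunction E ℝ, ¬ UniformContinuous ⇑f := by
  obtain ⟨f, hc, hb, hnu⟩ := stmt13_aux h
  refine ⟨BoundedContinuousFunction.ofNormedAddCommGroup f hc 1 ?_, ?_⟩
  · intro e
    have := hb e
    rw [Real.norm_eq_abs, abs_le]
    constructor <;> linarith [this.1, this.2]
  · simpa using hnu
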